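/- (Base point bound) If the divisor C has a base point P, i.e., L(C) = L(C - P), then any algebraic geometric code with designed minimum support C and defined with a divisor D whose support avoids P has minimum distance d >= deg C + 1. -/
import Mathlib


noncomputable section

/-- Degree of a divisor, where divisors on the curve are modeled as finitely
supported integer valued functions on the set of rational points. -/
def degr {Point : Type*} (D : Point →₀ ℤ) : ℤ := D.sum fun _ n => n

/-- An abstract model of a smooth projective absolutely irreducible curve over a field,
recording the data used in the paper: the dimension `l D` of the Riemann-Roch space
`L(D)`, the genus `g`, a canonical divisor `K`, and linear equivalence `lin`,
together with their basic properties (Riemann-Roch, monotonicity, semigroup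
properties of nongaps, etc.). -/
structure Curve (Point : Type*) where
  /-- `l D = dim L(D)` -/
  l : (Point →₀ ℤ) → ℕ
  /-- the genus -/
  g : ℕ
  /-- a canonical divisor -/
  K : Point →₀ ℤ
  /-- linear equivalence of divisors -/
  lin : (Point →₀ ℤ) → (Point →₀ ℤ) → Prop
  lin_refl : ∀ A, lin A A
  lin_symm : ∀ {A B}, lin A B → lin B A
  lin_trans : ∀ {A B C}, lin A B → lin B C → lin A C
  lin_add : ∀ {A B} (E : Point →₀ ℤ), lin A B → lin (A + E) (B + E)
  deg_lin : ∀ {A B}, lin A B → degr A = degr B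
  l_lin : ∀ {A B}, lin A B → l A = l B
  l_zero : l 0 = 1
  l_neg : ∀ {D}, degr D < 0 → l D = 0
  l_mono : ∀ (D : Point →₀ ℤ) (P : Point), l D ≤ l (D + Finsupp.single P 1)
  l_step : ∀ (D : Point →₀ ℤ) (P : Point), l (D + Finsupp.single P 1) ≤ l D + 1
  /-- Riemann-Roch -/
  rr : ∀ D : Point →₀ ℤ, (l D : ℤ) - l (K - D) = degr D + 1 - g
  lin_of_deg_zero : ∀ {D}, l D ≠ 0 → degr D = 0 → lin D 0
  /-- the semigroup property of `Γ_P` -/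
  gamma_add : ∀ (P : Point) {A B}, l A ≠ l (A - Finsupp.single P 1) →
      l B ≠ l (B - Finsupp.single P 1) → l (A + B) ≠ l (A + B - Finsupp.single P 1)
  eff_add : ∀ {A B}, l A ≠ 0 → l B ≠ 0 → l (A + B) ≠ 0
  point_nongap : ∀ {P Q : Point}, P ≠ Q →
      l (Finsupp.single P 1) ≠ l (Finsupp.single P 1 - Finsupp.single Q 1)

variable {Point : Type*}

/-- `Γ_P` : divisor (classes) with no base point at `P`, i.e. `L(A) ≠ L(A-P)`. -/
def GammaP (X : Curve Point) (P : Point) : Set (Point →₀ ℤ) :=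
  {A | X.l A ≠ X.l (A - Finsupp.single P 1)}

/-- `Γ_S = ∩_{P ∈ S} Γ_P`, with the convention `Γ_∅ = Γ = {A : L(A) ≠ 0}`. -/
def GammaS (X : Curve Point) (S : Finset Point) : Set (Point →₀ ℤ) :=
  {A | (S = ∅ → X.l A ≠ 0) ∧ ∀ P ∈ S, A ∈ GammaP X P}

/-- `Γ(C; S, S') = {A : A ∈ Γ_S and A - C ∈ Γ_{S'}}`. -/
def GammaSet (X : Curve Point) (C : Point →₀ ℤ) (S S' : Finset Point) :
    Set (Point →₀ ℤ) :=
  {A | A ∈ GammaS X S ∧ A - C ∈ GammaS X S'}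

/-- `γ(C; S, S') = min {deg A : A ∈ Γ(C; S, S')}`. -/
def gammaMin (X : Curve Point) (C : Point →₀ ℤ) (S S' : Finset Point) : ℤ :=
  sInf (degr '' GammaSet X C S S')

/-- `Δ = {i : A_i ∈ Γ_{P_i} and A_i - C ∉ Γ_{P_i}}` for indices `1 ≤ i ≤ n`. -/
def Delta (X : Curve Point) (C : Point →₀ ℤ) (n : ℕ) (A : ℕ → Point →₀ ℤ)
    (P : ℕ → Point) : Set ℕ :=
  {i | 1 ≤ i ∧ i ≤ n ∧ A i ∈ GammaP X (P i) ∧ A i - C ∉ GammaP X (P i)}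

/-- `Δ' = {i : A_i ∉ Γ_{P_i} and A_i - C ∈ Γ_{P_i}}` for indices `1 ≤ i ≤ n`. -/
def Delta' (X : Curve Point) (C : Point →₀ ℤ) (n : ℕ) (A : ℕ → Point →₀ ℤ)
    (P : ℕ → Point) : Set ℕ :=
  {i | 1 ≤ i ∧ i ≤ n ∧ A i ∉ GammaP X (P i) ∧ A i - C ∈ GammaP X (P i)}

lemma degr_single (P : Point) : degr (Finsupp.single P (1 : ℤ)) = 1 := by
  simp [degr]

lemma degr_sub (A B : Point →₀ ℤ) : degr (A - B) = degr A - degr B := by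
  classical
  exact Finsupp.sum_sub_index (by intros; rfl)

lemma sum_single_mem_GammaP (X : Curve Point) (P : Point) (s : Finset Point)
    (hP : P ∉ s) : (∑ Q ∈ s, Finsupp.single Q (1 : ℤ)) ∈ GammaP X P := by
  classical
  induction s using Finset.induction with
  | empty =>
      simp only [Finset.sum_empty, GammaP, Set.mem_setOf_eq]
      rw [X.l_zero, X.l_neg]
      · exact one_ne_zero
      · rw [degr_sub, degr_single]
        simp [degr]
  | @insert Q s hQ ih =>
      rw [Finset.sum_insert hQ]
      have hQP : Q ≠ P := fun h => hP (h ▸ Finset.mem_insert_self Q s)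
      exact X.gamma_add P (X.point_nongap hQP)
        (ih (fun h => hP (Finset.mem_insert_of_mem h)))

lemma eff_sum_single (D' : Point →₀ ℤ) (h0 : 0 ≤ D') (h1 : ∀ Q, D' Q ≤ 1) :
    D' = ∑ Q ∈ D'.support, Finsupp.single Q (1 : ℤ) := by
  classical
  conv_lhs => rw [← Finsupp.sum_single D']
  rw [Finsupp.sum]
  refine Finset.sum_congr rfl fun Q hQ => ?_
  have hne : D' Q ≠ 0 := Finsupp.mem_support_iff.mp hQ
  have : D' Q = 1 := le_antisymm (h1 Q) (by
    have h2 : (0:ℤ) ≤ D' Q := by simpa using Finsupp.le_def.mp h0 Q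
    omega)
  rw [this]

/-- (Base point bound) If the divisor `C` has a base point `P`, i.e. `L(C) = L(C-P)`,
then an algebraic geometric code with designed minimum support `C`, defined with a
divisor `D` whose support avoids `P`, has minimum distance `d ≥ deg C + 1`.  The code is
modeled abstractly by the defining property that a nonzero codeword `c` has a support
divisor `D'` which is a sum of `wt(c)` distinct points of `D` with `L(D' - C) ≠ 0`. -/
theorem base_point_bound (X : Curve Point) {F : Type*} [Field F] [DecidableEq F] {n : ℕ}
    (Code : Submodule F (Fin n → F)) (D : Finset Point) (C : Point →₀ ℤ) (P : Point)
    (hP : P ∉ D)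
    (hbase : X.l C = X.l (C - Finsupp.single P 1))
    (hcode : ∀ c ∈ Code, c ≠ 0 → ∃ D' : Point →₀ ℤ,
      0 ≤ D' ∧ (∀ Q, D' Q ≤ 1) ∧ D'.support ⊆ D ∧
      degr D' = (hammingNorm c : ℤ) ∧ X.l (D' - C) ≠ 0) :
    ∀ c ∈ Code, c ≠ 0 → degr C + 1 ≤ (hammingNorm c : ℤ) := by
  intro c hc hne
  obtain ⟨D', hD0, hD1, hsup, hdeg, hl⟩ := hcode c hc hne
  rw [← hdeg]
  by_contra hlt
  push_neg at hlt
  have hge : 0 ≤ degr (D' - C) := by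
    by_contra h
    exact hl (X.l_neg (lt_of_not_ge h))
  rw [degr_sub] at hge
  have hdeq : degr (D' - C) = 0 := by rw [degr_sub]; omega
  have hlin : X.lin (D' - C) 0 := X.lin_of_deg_zero hl hdeq
  have hlin2 : X.lin D' C := by
    have := X.lin_add C hlin
    simpa using this
  have hlin3 : X.lin (D' - Finsupp.single P 1) (C - Finsupp.single P 1) := by
    have := X.lin_add (-(Finsupp.single P 1)) hlin2
    simpa [sub_eq_add_neg] using this
  have hmem : D' ∈ GammaP X P := by
    rw [eff_sum_single D' hD0 hD1]
    exact sum_single_mem_GammaP X P _ (fun h => hP (hsup h))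
  exact hmem (by rw [X.l_lin hlin2, X.l_lin hlin3, hbase])
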